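/- There exists a constant C > 0 such that for every hypergraph H = (V, E) on n ≥ 2 vertices the following holds. Let G(H) be the server graph of H. Then for some integer k there exist a partition of V into sets S_1, …, S_k, colors c_1, …, c_k ∈ {1, 2, …, ⌈C·log n⌉}, and connected subgraphs G_1, …, G_k of G(H) such that: (1) for every i, S_i ⊆ V(G_i) and the diameter of G_i is at most C·log n; (2) for any i ≠ j with c_i = c_j, no hyperedge of H contains a vertex of S_i and a vertex of S_j; and (3) every edge of G(H) belongs to at most C·log³ n of the subgraphs G_1, …, G_k. -/

import Mathlib

/-- The server graph of a hypergraph with edge family `E`: two distinct vertices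
are adjacent iff some hyperedge contains both. -/
def serverGraph {V : Type*} (E : Finset (Finset V)) : SimpleGraph V :=
  SimpleGraph.fromRel fun u v => ∃ e ∈ E, u ∈ e ∧ v ∈ e

namespace LSdecomp
open SimpleGraph

variable {V : Type} [Fintype V] [DecidableEq V]

def gr (G : SimpleGraph V) (A : Finset V) : SimpleGraph V where
  Adj u v := u ∈ A ∧ v ∈ A ∧ G.Adj u v
  symm := ⟨fun _ _ ⟨ha, hb, h⟩ => ⟨hb, ha, h.symm⟩⟩
  loopless := ⟨fun v ⟨_, _, h⟩ => G.ne_of_adj h rfl⟩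

open Classical in
noncomputable def ball (G : SimpleGraph V) (A : Finset V) (v : V) (r : ℕ) : Finset V :=
  A.filter (fun x => (gr G A).edist v x ≤ r)

lemma mem_ball {G : SimpleGraph V} {A : Finset V} {v x : V} {r : ℕ} :
    x ∈ ball G A v r ↔ x ∈ A ∧ (gr G A).edist v x ≤ r := by
  simp [ball]

lemma ball_subset {G : SimpleGraph V} {A : Finset V} {v : V} {r : ℕ} :
    ball G A v r ⊆ A := fun x hx => (mem_ball.mp hx).1

lemma ball_mono {G : SimpleGraph V} {A : Finset V} {v : V} {r s : ℕ} (h : r ≤ s) :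
    ball G A v r ⊆ ball G A v s := by
  intro x hx
  rw [mem_ball] at hx ⊢
  exact ⟨hx.1, hx.2.trans (by exact_mod_cast Nat.cast_le.mpr h)⟩

lemma self_mem_ball {G : SimpleGraph V} {A : Finset V} {v : V} (hv : v ∈ A) (r : ℕ) :
    v ∈ ball G A v r := mem_ball.mpr ⟨hv, by simp [SimpleGraph.edist_self]⟩

lemma adj_mem_ball {G : SimpleGraph V} {A : Finset V} {v x y : V} {r : ℕ}
    (hx : x ∈ ball G A v r) (hy : y ∈ A) (hadj : G.Adj x y) :
    y ∈ ball G A v (r + 1) := by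
  rw [mem_ball] at hx ⊢
  refine ⟨hy, ?_⟩
  have h1 : (gr G A).edist x y ≤ 1 := by
    have : (gr G A).Adj x y := ⟨hx.1, hy, hadj⟩
    exact le_of_eq (edist_eq_one_iff_adj.mpr this)
  calc (gr G A).edist v y ≤ (gr G A).edist v x + (gr G A).edist x y :=
        SimpleGraph.edist_triangle
    _ ≤ (r : ℕ∞) + 1 := add_le_add hx.2 h1
    _ = ((r + 1 : ℕ) : ℕ∞) := by push_cast; ring

lemma walk_in_ball {G : SimpleGraph V} {A : Finset V} {v : V} {r : ℕ} (hv : v ∈ A) :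
    ∀ (d : ℕ), d ≤ r → ∀ x : V, (gr G A).edist v x ≤ d →
      ∃ w : (gr G (ball G A v r)).Walk v x, w.length ≤ d := by
  intro d
  induction d with
  | zero =>
    intro _ x hx
    have h0 : (gr G A).edist v x = 0 := le_antisymm (by simpa using hx) zero_le
    obtain rfl : v = x := SimpleGraph.edist_eq_zero_iff.mp h0
    exact ⟨SimpleGraph.Walk.nil, by simp⟩
  | succ d ih =>
    intro hdr x hx
    by_cases hle : (gr G A).edist v x ≤ d
    · obtain ⟨w, hw⟩ := ih (by omega) x hle
      exact ⟨w, hw.trans (by omega)⟩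
    · push_neg at hle
      have hne : (gr G A).edist v x ≠ ⊤ := by
        intro h
        rw [h, top_le_iff] at hx
        exact ENat.coe_ne_top _ hx
      obtain ⟨p, hp⟩ := SimpleGraph.exists_walk_of_edist_ne_top hne
      have hxv : x ≠ v := by
        rintro rfl
        rw [show (gr G A).edist x x = 0 from SimpleGraph.edist_self] at hle
        simp at hle
      have hplen : p.length = d + 1 := by
        have h1 : p.length ≤ d + 1 := by exact_mod_cast hp ▸ hx
        have h2 : d < p.length := by exact_mod_cast hp ▸ hle
        omega
      obtain ⟨y, hadj, q, hq⟩ := p.reverse.exists_eq_cons_of_ne hxv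
      have hqlen : q.length = d := by
        have := congrArg SimpleGraph.Walk.length hq
        simp [hplen] at this
        omega
      have hyd : (gr G A).edist v y ≤ d := by
        rw [SimpleGraph.edist_comm]
        simpa [hqlen] using SimpleGraph.edist_le q
      obtain ⟨w', hw'⟩ := ih (by omega) y hyd
      have hyB : y ∈ ball G A v r :=
        mem_ball.mpr ⟨hadj.2.1, hyd.trans (by exact_mod_cast Nat.cast_le.mpr (by omega))⟩
      have hxB : x ∈ ball G A v r :=
        mem_ball.mpr ⟨hadj.1, hx.trans (by exact_mod_cast Nat.cast_le.mpr hdr)⟩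
      refine ⟨w'.concat ⟨hyB, hxB, hadj.2.2.symm⟩, ?_⟩
      have hlc := SimpleGraph.Walk.length_concat w' ⟨hyB, hxB, hadj.2.2.symm⟩
      omega

lemma exists_radius (G : SimpleGraph V) (A : Finset V) (v : V) (hv : v ∈ A) :
    ∃ r ≤ Nat.log 2 A.card, (ball G A v (r+1)).card ≤ 2 * (ball G A v r).card := by
  by_contra hcon
  push_neg at hcon
  have hgrow : ∀ r, r ≤ Nat.log 2 A.card + 1 → 2 ^ r ≤ (ball G A v r).card := by
    intro r
    induction r with
    | zero =>
      intro _
      simpa using Finset.card_pos.mpr ⟨v, self_mem_ball hv 0⟩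
    | succ r ih =>
      intro hr
      have h1 := hcon r (by omega)
      have h2 := ih (by omega)
      calc 2 ^ (r+1) = 2 * 2 ^ r := by ring
        _ ≤ 2 * (ball G A v r).card := by omega
        _ ≤ (ball G A v (r+1)).card := le_of_lt h1
  have h3 := hgrow (Nat.log 2 A.card + 1) (le_refl _)
  have h4 : (ball G A v (Nat.log 2 A.card + 1)).card ≤ A.card :=
    Finset.card_le_card ball_subset
  have h5 : A.card < 2 ^ (Nat.log 2 A.card + 1) := Nat.lt_pow_succ_log_self (by omega) _
  omega

def unionL (cs : List (Finset V)) : Finset V := cs.foldr (· ∪ ·) ∅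

lemma mem_unionL {cs : List (Finset V)} {x : V} :
    x ∈ unionL cs ↔ ∃ B ∈ cs, x ∈ B := by
  induction cs with
  | nil => simp [unionL]
  | cons B cs ih =>
    simp only [unionL, List.foldr_cons, Finset.mem_union] at *
    rw [ih]
    simp

def ClusterProp (G : SimpleGraph V) (B : Finset V) : Prop :=
  ∃ v ∈ B, ∀ x ∈ B, ∃ w : (gr G B).Walk v x, w.length ≤ Nat.log 2 (Fintype.card V)

lemma phase (G : SimpleGraph V) :
    ∀ (n : ℕ) (A : Finset V), A.card ≤ n →
    ∃ (cs : List (Finset V)) (rest : Finset V),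
      (∀ B ∈ cs, B ⊆ A ∧ B.Nonempty ∧ ClusterProp G B) ∧
      cs.Pairwise (fun B B' => Disjoint B B' ∧ ∀ x ∈ B, ∀ y ∈ B', ¬ G.Adj x y) ∧
      (∀ B ∈ cs, Disjoint B rest) ∧
      (∀ a, a ∈ A ↔ a ∈ rest ∨ ∃ B ∈ cs, a ∈ B) ∧
      rest.card ≤ (unionL cs).card := by
  intro n
  induction n with
  | zero =>
    intro A hA
    have : A = ∅ := Finset.card_eq_zero.mp (by omega)
    subst this
    exact ⟨[], ∅, by simp, by simp, by simp, by simp, by simp⟩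
  | succ n ih =>
    intro A hA
    by_cases hAe : A = ∅
    · subst hAe
      exact ⟨[], ∅, by simp, by simp, by simp, by simp, by simp⟩
    obtain ⟨v, hv⟩ := Finset.nonempty_of_ne_empty hAe
    obtain ⟨r, hrlog, hrcard⟩ := exists_radius G A v hv
    set B := ball G A v r with hBdef
    set N := ball G A v (r+1) with hNdef
    have hBN : B ⊆ N := ball_mono (by omega)
    have hNA : N ⊆ A := ball_subset
    have hvB : v ∈ B := self_mem_ball hv r
    have hvN : v ∈ N := self_mem_ball hv (r+1)
    have hA' : (A \ N).card ≤ n := by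
      have hlt : (A \ N).card < A.card :=
        Finset.card_lt_card (Finset.sdiff_ssubset hNA ⟨v, hvN⟩)
      omega
    obtain ⟨cs', rest', h1, h2, h3, h4, h5⟩ := ih (A \ N) hA'
    -- clusters of the tail avoid N
    have htail : ∀ B' ∈ cs', B' ⊆ A \ N := fun B' hB' => (h1 B' hB').1
    have hBdisj : ∀ B' ∈ cs', Disjoint B B' ∧ ∀ x ∈ B, ∀ y ∈ B', ¬ G.Adj x y := by
      intro B' hB'
      constructor
      · rw [Finset.disjoint_left]
        intro x hxB hxB'
        exact (Finset.mem_sdiff.mp (htail B' hB' hxB')).2 (hBN hxB)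
      · intro x hxB y hyB' hadj
        have hyA : y ∈ A := (Finset.mem_sdiff.mp (htail B' hB' hyB')).1
        exact (Finset.mem_sdiff.mp (htail B' hB' hyB')).2 (adj_mem_ball hxB hyA hadj)
    refine ⟨B :: cs', rest' ∪ (N \ B), ?_, ?_, ?_, ?_, ?_⟩
    · intro B' hB'
      rcases List.mem_cons.mp hB' with rfl | hB'
      · refine ⟨ball_subset, ⟨v, hvB⟩, v, hvB, ?_⟩
        intro x hx
        obtain ⟨w, hw⟩ := walk_in_ball hv r (le_refl r) x (mem_ball.mp hx).2
        refine ⟨w, hw.trans (hrlog.trans ?_)⟩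
        exact Nat.log_mono_right (by simpa using Finset.card_le_univ A)
      · obtain ⟨hs, hne, hc⟩ := h1 B' hB'
        exact ⟨hs.trans (Finset.sdiff_subset), hne, hc⟩
    · exact List.pairwise_cons.mpr ⟨hBdisj, h2⟩
    · intro B' hB'
      rcases List.mem_cons.mp hB' with rfl | hB'
      · rw [Finset.disjoint_union_right]
        constructor
        · rw [Finset.disjoint_left]
          intro x hxB hxr
          have : x ∈ A \ N := (h4 x).mpr (Or.inl hxr)
          exact (Finset.mem_sdiff.mp this).2 (hBN hxB)
        · exact Finset.disjoint_sdiff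
      · rw [Finset.disjoint_union_right]
        refine ⟨h3 B' hB', ?_⟩
        rw [Finset.disjoint_left]
        intro x hxB' hxNB
        exact (Finset.mem_sdiff.mp (htail B' hB' hxB')).2 (Finset.mem_sdiff.mp hxNB).1
    · intro a
      constructor
      · intro ha
        by_cases haN : a ∈ N
        · by_cases haB : a ∈ B
          · exact Or.inr ⟨B, List.mem_cons_self, haB⟩
          · exact Or.inl (Finset.mem_union.mpr (Or.inr (Finset.mem_sdiff.mpr ⟨haN, haB⟩)))
        · rcases (h4 a).mp (Finset.mem_sdiff.mpr ⟨ha, haN⟩) with h | ⟨B', hB', haB'⟩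
          · exact Or.inl (Finset.mem_union.mpr (Or.inl h))
          · exact Or.inr ⟨B', List.mem_cons_of_mem _ hB', haB'⟩
      · rintro (h | ⟨B', hB', haB'⟩)
        · rcases Finset.mem_union.mp h with h | h
          · exact (Finset.mem_sdiff.mp ((h4 a).mpr (Or.inl h))).1
          · exact hNA (Finset.mem_sdiff.mp h).1
        · rcases List.mem_cons.mp hB' with rfl | hB'
          · exact hNA (hBN haB')
          · exact (Finset.mem_sdiff.mp ((h4 a).mpr (Or.inr ⟨B', hB', haB'⟩))).1
    · have hdisj : Disjoint B (unionL cs') := by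
        rw [Finset.disjoint_left]
        intro x hxB hxU
        obtain ⟨B', hB', hxB'⟩ := mem_unionL.mp hxU
        exact (Finset.mem_sdiff.mp (htail B' hB' hxB')).2 (hBN hxB)
      have hsd : (N \ B).card = N.card - B.card := Finset.card_sdiff_of_subset hBN
      have hBled : B.card ≤ N.card := Finset.card_le_card hBN
      calc (rest' ∪ (N \ B)).card ≤ rest'.card + (N \ B).card := Finset.card_union_le _ _
        _ ≤ (unionL cs').card + B.card := by omega
        _ = (unionL (B :: cs')).card := by
            rw [show unionL (B :: cs') = B ∪ unionL cs' from rfl,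
              Finset.card_union_of_disjoint hdisj]
            omega

/-- the subgraph of `G` induced on `B` -/
def toSubgraph (G : SimpleGraph V) (B : Finset V) : G.Subgraph where
  verts := ↑B
  Adj := (gr G B).Adj
  adj_sub := fun h => h.2.2
  edge_vert := fun h => by exact h.1
  symm := (gr G B).symm

lemma liftWalk {G : SimpleGraph V} {B : Finset V} :
    ∀ {a b : V} (w : (gr G B).Walk a b) (ha : a ∈ B) (hb : b ∈ B),
      ∃ w' : (toSubgraph G B).coe.Walk ⟨a, ha⟩ ⟨b, hb⟩, w'.length = w.length := by
  intro a b w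
  induction w with
  | nil => intro ha _; exact ⟨SimpleGraph.Walk.nil, rfl⟩
  | @cons a c b h p ih =>
    intro ha hb
    obtain ⟨w', hw'⟩ := ih h.2.1 hb
    have hadj : (toSubgraph G B).coe.Adj ⟨a, ha⟩ ⟨c, h.2.1⟩ := h
    exact ⟨SimpleGraph.Walk.cons hadj w', by simp [hw']⟩

lemma cluster_connected_diam {G : SimpleGraph V} {B : Finset V} (hB : ClusterProp G B) :
    (toSubgraph G B).coe.Connected ∧
      (toSubgraph G B).coe.diam ≤ 2 * Nat.log 2 (Fintype.card V) := by
  obtain ⟨v, hv, hwalk⟩ := hB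
  set R := Nat.log 2 (Fintype.card V)
  have key : ∀ x : (toSubgraph G B).verts,
      (toSubgraph G B).coe.edist ⟨v, hv⟩ x ≤ R := by
    rintro ⟨x, hx⟩
    obtain ⟨w, hw⟩ := hwalk x hx
    obtain ⟨w', hw'⟩ := liftWalk w hv hx
    calc (toSubgraph G B).coe.edist ⟨v, hv⟩ ⟨x, hx⟩ ≤ w'.length := SimpleGraph.edist_le w'
      _ ≤ (R : ℕ∞) := by exact_mod_cast hw' ▸ hw
  have hconn : (toSubgraph G B).coe.Connected := by
    rw [SimpleGraph.connected_iff]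
    refine ⟨fun x y => ?_, ⟨⟨v, hv⟩⟩⟩
    have hx : (toSubgraph G B).coe.Reachable ⟨v, hv⟩ x :=
      SimpleGraph.reachable_of_edist_ne_top
        (fun h => absurd (h ▸ key x) (by simp [top_le_iff]))
    have hy : (toSubgraph G B).coe.Reachable ⟨v, hv⟩ y :=
      SimpleGraph.reachable_of_edist_ne_top
        (fun h => absurd (h ▸ key y) (by simp [top_le_iff]))
    exact hx.symm.trans hy
  refine ⟨hconn, ?_⟩
  have hed : (toSubgraph G B).coe.ediam ≤ (2 * R : ℕ) := by
    apply SimpleGraph.ediam_le_of_edist_le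
    intro x y
    calc (toSubgraph G B).coe.edist x y
        ≤ (toSubgraph G B).coe.edist x ⟨v, hv⟩ + (toSubgraph G B).coe.edist ⟨v, hv⟩ y :=
          SimpleGraph.edist_triangle
      _ ≤ (R : ℕ∞) + (R : ℕ∞) := add_le_add (SimpleGraph.edist_comm ▸ key x) (key y)
      _ = ((2 * R : ℕ) : ℕ∞) := by push_cast; ring
  have h2 : ((2 * R : ℕ) : ℕ∞) ≠ ⊤ := ENat.coe_ne_top _
  have := ENat.toNat_le_toNat hed h2
  simpa [SimpleGraph.diam] using this

lemma decomp (G : SimpleGraph V) :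
    ∀ (n : ℕ) (A : Finset V), A.card ≤ n →
    ∃ L : List (Finset V × ℕ),
      (∀ p ∈ L, p.1 ⊆ A ∧ p.1.Nonempty ∧ ClusterProp G p.1 ∧
        1 ≤ p.2 ∧ p.2 ≤ Nat.log 2 A.card + 1) ∧
      L.Pairwise (fun p q => Disjoint p.1 q.1 ∧
        (p.2 = q.2 → ∀ x ∈ p.1, ∀ y ∈ q.1, ¬ G.Adj x y)) ∧
      (∀ a, a ∈ A ↔ ∃ p ∈ L, a ∈ p.1) := by
  intro n
  induction n with
  | zero =>
    intro A hA
    have : A = ∅ := Finset.card_eq_zero.mp (by omega)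
    subst this
    exact ⟨[], by simp, by simp, by simp⟩
  | succ n ih =>
    intro A hA
    by_cases hAe : A = ∅
    · subst hAe
      exact ⟨[], by simp, by simp, by simp⟩
    obtain ⟨cs, rest, h1, h2, h3, h4, h5⟩ := phase G A.card A (le_refl _)
    -- rest is at most half of A
    have hrU : Disjoint rest (unionL cs) := by
      rw [Finset.disjoint_right]
      intro x hxU hxr
      obtain ⟨B, hB, hxB⟩ := mem_unionL.mp hxU
      exact Finset.disjoint_left.mp (h3 B hB) hxB hxr
    have hAeq : A = rest ∪ unionL cs := by
      ext a
      rw [h4 a, Finset.mem_union, mem_unionL]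
    have hcard : A.card = rest.card + (unionL cs).card := by
      rw [hAeq, Finset.card_union_of_disjoint hrU]
    have hhalf : 2 * rest.card ≤ A.card := by omega
    have hApos : 1 ≤ A.card := Finset.card_pos.mpr (Finset.nonempty_of_ne_empty hAe)
    have hrest_n : rest.card ≤ n := by omega
    obtain ⟨L', g1, g2, g3⟩ := ih rest hrest_n
    have hrsubA : rest ⊆ A := fun a ha => (h4 a).mpr (Or.inl ha)
    refine ⟨cs.map (fun B => (B, 1)) ++ L'.map (fun p => (p.1, p.2 + 1)), ?_, ?_, ?_⟩
    · intro p hp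
      rcases List.mem_append.mp hp with hp | hp
      · obtain ⟨B, hB, rfl⟩ := List.mem_map.mp hp
        obtain ⟨hs, hne, hc⟩ := h1 B hB
        exact ⟨hs, hne, hc, le_refl _, by omega⟩
      · obtain ⟨q, hq, rfl⟩ := List.mem_map.mp hp
        obtain ⟨hs, hne, hc, hc1, hc2⟩ := g1 q hq
        have hrne : rest.Nonempty := hne.mono hs
        have hlog : Nat.log 2 rest.card + 1 ≤ Nat.log 2 A.card := by
          have e1 : Nat.log 2 (rest.card * 2) = Nat.log 2 rest.card + 1 :=
            Nat.log_mul_base (by omega) (Finset.card_pos.mpr hrne).ne'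
          have e2 : rest.card * 2 ≤ A.card := by omega
          rw [← e1]
          exact Nat.log_mono_right e2
        exact ⟨hs.trans hrsubA, hne, hc, by omega, by simp; omega⟩
    · rw [List.pairwise_append]
      refine ⟨?_, ?_, ?_⟩
      · rw [List.pairwise_map]
        apply h2.imp
        intro B B' hBB'
        exact ⟨hBB'.1, fun _ => hBB'.2⟩
      · rw [List.pairwise_map]
        apply g2.imp
        intro p q hpq
        exact ⟨hpq.1, fun h => hpq.2 (by omega)⟩
      · intro p hp q hq
        obtain ⟨B, hB, rfl⟩ := List.mem_map.mp hp
        obtain ⟨q', hq', rfl⟩ := List.mem_map.mp hq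
        constructor
        · have hqrest : q'.1 ⊆ rest := (g1 q' hq').1
          exact Finset.disjoint_coe.mp (by
            exact_mod_cast (h3 B hB).mono_right
              (by exact_mod_cast Finset.coe_subset.mpr hqrest))
        · intro h
          have := (g1 q' hq').2.2.2.1
          omega
    · intro a
      rw [h4 a]
      constructor
      · rintro (h | ⟨B, hB, haB⟩)
        · obtain ⟨p, hp, hap⟩ := (g3 a).mp h
          exact ⟨(p.1, p.2 + 1), List.mem_append_right _ (List.mem_map.mpr ⟨p, hp, rfl⟩), hap⟩
        · exact ⟨(B, 1), List.mem_append_left _ (List.mem_map.mpr ⟨B, hB, rfl⟩), haB⟩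
      · rintro ⟨p, hp, hap⟩
        rcases List.mem_append.mp hp with hp | hp
        · obtain ⟨B, hB, rfl⟩ := List.mem_map.mp hp
          exact Or.inr ⟨B, hB, hap⟩
        · obtain ⟨q, hq, rfl⟩ := List.mem_map.mp hp
          exact Or.inl ((g3 a).mpr ⟨q, hq, hap⟩)

end LSdecomp

/-- The existence content of the paper's extension of the Linial–Saks network
decomposition. -/
theorem linial_saks_hypergraph_decomposition :
    ∃ C : ℝ, 0 < C ∧
      ∀ (V : Type) [Fintype V] [DecidableEq V] (E : Finset (Finset V)),
        2 ≤ Fintype.card V →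
        ∃ (k : ℕ) (S : Fin k → Finset V) (c : Fin k → ℕ)
          (Gs : Fin k → (serverGraph E).Subgraph),
          (∀ v : V, ∃! i : Fin k, v ∈ S i) ∧
          (∀ i : Fin k, c i ∈ Finset.Icc 1 ⌈C * Real.log (Fintype.card V)⌉₊) ∧
          (∀ i : Fin k, ↑(S i) ⊆ (Gs i).verts ∧ (Gs i).coe.Connected ∧
            ((Gs i).coe.diam : ℝ) ≤ C * Real.log (Fintype.card V)) ∧
          (∀ i j : Fin k, i ≠ j → c i = c j →
            ∀ e ∈ E, ¬ ∃ u ∈ e, ∃ w ∈ e, u ∈ S i ∧ w ∈ S j) ∧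
          (∀ x y : V, (serverGraph E).Adj x y →
            ((Set.ncard {i : Fin k | (Gs i).Adj x y} : ℝ)
              ≤ C * Real.log (Fintype.card V) ^ 3)) := by
  classical
  refine ⟨10, by norm_num, ?_⟩
  intro V _ _ E hn
  set G := serverGraph E with hGdef
  obtain ⟨L, g1, g2, g3⟩ := LSdecomp.decomp G (Fintype.card V) Finset.univ
    (by simp [Finset.card_univ])
  -- numeric preparations
  set nR : ℝ := (Fintype.card V : ℝ) with hnR
  have hn2 : (2 : ℝ) ≤ nR := by rw [hnR]; exact_mod_cast hn
  have hlog2 : (0.6931471803 : ℝ) < Real.log 2 := Real.log_two_gt_d9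
  have hlogn : Real.log 2 ≤ Real.log nR := Real.log_le_log (by norm_num) hn2
  have hlogpos : (0.6931471803 : ℝ) < Real.log nR := lt_of_lt_of_le hlog2 hlogn
  have hkey : (Nat.log 2 (Fintype.card V) : ℝ) ≤ Real.log nR / Real.log 2 := by
    have h := Real.natLog_le_logb (Fintype.card V) 2
    rwa [← Real.log_div_log] at h
  have hNlog : (Nat.log 2 (Fintype.card V) : ℝ) ≤ 2 * Real.log nR := by
    refine hkey.trans ?_
    rw [div_le_iff₀ (by linarith)]
    nlinarith
  have hone : (1 : ℝ) ≤ 2 * Real.log nR := by linarith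
  have hcolR : ((Nat.log 2 (Fintype.card V) : ℝ) + 1) ≤ 10 * Real.log nR := by linarith
  have hdisj : ∀ i j : Fin L.length, i ≠ j →
      Disjoint (L.get i).1 (L.get j).1 := by
    intro i j hij
    rcases lt_or_gt_of_ne hij with h | h
    · exact ((List.pairwise_iff_get.mp g2) i j h).1
    · exact (((List.pairwise_iff_get.mp g2) j i h).1).symm
  have hnadj : ∀ i j : Fin L.length, i ≠ j → (L.get i).2 = (L.get j).2 →
      ∀ x ∈ (L.get i).1, ∀ y ∈ (L.get j).1, ¬ G.Adj x y := by
    intro i j hij hc x hx y hy hadj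
    rcases lt_or_gt_of_ne hij with h | h
    · exact ((List.pairwise_iff_get.mp g2) i j h).2 hc x hx y hy hadj
    · exact ((List.pairwise_iff_get.mp g2) j i h).2 hc.symm y hy x hx hadj.symm
  refine ⟨L.length, fun i => (L.get i).1, fun i => (L.get i).2,
    fun i => LSdecomp.toSubgraph G (L.get i).1, ?_, ?_, ?_, ?_, ?_⟩
  · -- partition
    intro v
    obtain ⟨p, hp, hvp⟩ := (g3 v).mp (Finset.mem_univ v)
    obtain ⟨i, hi⟩ := List.mem_iff_get.mp hp
    subst hi
    refine ⟨i, hvp, ?_⟩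
    intro j hj
    by_contra hne
    exact Finset.disjoint_left.mp (hdisj j i hne) hj hvp
  · -- colors
    intro i
    have hmem := g1 _ (L.get_mem i)
    rw [Finset.mem_Icc]
    refine ⟨hmem.2.2.2.1, ?_⟩
    have hle : (L.get i).2 ≤ Nat.log 2 (Fintype.card V) + 1 := by
      simpa [Finset.card_univ] using hmem.2.2.2.2
    have hcast : ((L.get i).2 : ℝ) ≤ (⌈(10 : ℝ) * Real.log nR⌉₊ : ℝ) :=
      calc ((L.get i).2 : ℝ) ≤ (Nat.log 2 (Fintype.card V) : ℝ) + 1 := by exact_mod_cast hle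
        _ ≤ 10 * Real.log nR := hcolR
        _ ≤ _ := Nat.le_ceil _
    exact_mod_cast hcast
  · -- subgraphs: connected, small diameter
    intro i
    have hmem := g1 _ (L.get_mem i)
    obtain ⟨hconn, hdiam⟩ := LSdecomp.cluster_connected_diam hmem.2.2.1
    refine ⟨fun x hx => hx, hconn, ?_⟩
    calc ((LSdecomp.toSubgraph G (L.get i).1).coe.diam : ℝ)
        ≤ 2 * (Nat.log 2 (Fintype.card V) : ℝ) := by exact_mod_cast hdiam
      _ ≤ 10 * Real.log nR := by linarith
  · -- same-color separation
    rintro i j hij hc e he ⟨u, hu, w, hw, hui, hwj⟩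
    by_cases huw : u = w
    · subst huw
      exact Finset.disjoint_left.mp (hdisj i j hij) hui hwj
    · have hadj : G.Adj u w := by
        have h' : (SimpleGraph.fromRel fun a b => ∃ e ∈ E, a ∈ e ∧ b ∈ e).Adj u w := by
          rw [SimpleGraph.fromRel_adj]
          exact ⟨huw, Or.inl ⟨e, he, hu, hw⟩⟩
        exact h'
      exact hnadj i j hij hc u hui w hwj hadj
  · -- edge congestion
    intro x y _
    have hsub : {i : Fin L.length | (LSdecomp.toSubgraph G (L.get i).1).Adj x y}.ncard ≤ 1 := by
      rw [Set.ncard_le_one (Set.toFinite _)]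
      intro a ha b hb
      by_contra hab
      have hxa : x ∈ (L.get a).1 := ha.1
      have hxb : x ∈ (L.get b).1 := hb.1
      exact Finset.disjoint_left.mp (hdisj a b hab) hxa hxb
    have hcube : (0.6931471803 : ℝ) ^ 3 ≤ Real.log nR ^ 3 :=
      pow_le_pow_left₀ (by norm_num) (le_of_lt hlogpos) 3
    calc ({i : Fin L.length | (LSdecomp.toSubgraph G (L.get i).1).Adj x y}.ncard : ℝ)
        ≤ 1 := by exact_mod_cast hsub
      _ ≤ 10 * Real.log nR ^ 3 := by nlinarith
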